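/- In ℤ_2, the set of values of the binary quadratic form Q(x,y) = 2x^2 + 2xy + 2y^2 equals {0} ∪ {w ∈ ℤ_2 : v_2(w) is odd}, where v_2 denotes the 2-adic valuation. -/

import Mathlib

open PadicInt

lemma isUnit_iff_toZMod (z : ℤ_[2]) : IsUnit z ↔ PadicInt.toZMod z ≠ 0 := by
  rw [Ne, ← RingHom.mem_ker, PadicInt.ker_toZMod, IsLocalRing.mem_maximalIdeal,
    mem_nonunits_iff, not_not]

lemma form_isUnit {a b : ℤ_[2]} (ha : IsUnit a) : IsUnit (a ^ 2 + a * b + b ^ 2) := by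
  rw [isUnit_iff_toZMod] at ha ⊢
  rw [map_add, map_add, map_mul, map_pow, map_pow]
  revert ha
  generalize PadicInt.toZMod a = A
  generalize PadicInt.toZMod b = B
  revert A B; decide

lemma unit_val_zero {c : ℤ_[2]} (hc : IsUnit c) : c.valuation = 0 := by
  have h1 : ‖c‖ = 1 := PadicInt.isUnit_iff.mp hc
  rw [PadicInt.norm_eq_zpow_neg_valuation hc.ne_zero] at h1
  have h2 : ((2 : ℕ) : ℝ) ^ (-(c.valuation : ℤ)) = ((2:ℕ):ℝ) ^ (0:ℤ) := by simpa using h1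
  have h3 := (zpow_right_inj₀ (by norm_num) (by norm_num)).mp h2
  omega

lemma represent_unit {u : ℤ_[2]} (hu : IsUnit u) : ∃ t : ℤ_[2], 1 + t + t ^ 2 = u := by
  set F : Polynomial ℤ_[2] := Polynomial.X ^ 2 + Polynomial.X + Polynomial.C (1 - u) with hF
  have heval : F.eval 0 = 1 - u := by simp [hF]
  have hderiv : F.derivative.eval 0 = 1 := by simp [hF]
  have hnorm : ‖F.eval 0‖ < ‖F.derivative.eval 0‖ ^ 2 := by
    rw [heval, hderiv, norm_one, one_pow, ← PadicInt.not_isUnit_iff]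
    rw [isUnit_iff_toZMod] at hu ⊢
    rw [map_sub, map_one, not_not]
    revert hu; generalize PadicInt.toZMod u = A; revert A; decide
  obtain ⟨z, hz, -⟩ := hensels_lemma hnorm
  refine ⟨z, ?_⟩
  have h0 : z ^ 2 + z + (1 - u) = 0 := by simpa [hF] using hz
  linear_combination h0

lemma forward_case {x y : ℤ_[2]} (hx : x ≠ 0)
    (hyx : x ∣ y) : Odd (2 * x ^ 2 + 2 * x * y + 2 * y ^ 2).valuation := by
  obtain ⟨t, rfl⟩ := hyx
  have hform : IsUnit (1 + t + t ^ 2) := by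
    have := form_isUnit (a := 1) (b := t) isUnit_one
    convert this using 1; ring
  set c : ℤ_[2] := (PadicInt.unitCoeff hx : ℤ_[2]) ^ 2 * (1 + t + t ^ 2) with hc
  have hcu : IsUnit c := ((PadicInt.unitCoeff hx).isUnit.pow 2).mul hform
  have key : 2 * x ^ 2 + 2 * x * (x * t) + 2 * (x * t) ^ 2
      = (2 : ℤ_[2]) ^ (2 * x.valuation + 1) * c := by
    nth_rewrite 1 2 3 4 [PadicInt.unitCoeff_spec hx]
    rw [hc]; ring
  rw [key]
  have h2 : ((2 : ℕ) : ℤ_[2]) = (2 : ℤ_[2]) := by norm_num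
  have := PadicInt.valuation_p_pow_mul (p := 2) (2 * x.valuation + 1) c hcu.ne_zero
  rw [h2] at this
  rw [this, unit_val_zero hcu]
  refine ⟨x.valuation, by push_cast; ring⟩

theorem aniso_values :
    {w : ℤ_[2] | ∃ x y : ℤ_[2], w = 2 * x ^ 2 + 2 * x * y + 2 * y ^ 2}
      = {0} ∪ {w : ℤ_[2] | Odd w.valuation} := by
  ext w
  simp only [Set.mem_setOf_eq, Set.mem_union, Set.mem_singleton_iff]
  constructor
  · rintro ⟨x, y, rfl⟩
    by_cases hx : x = 0
    · by_cases hy : y = 0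
      · left; rw [hx, hy]; ring
      · right
        have hs : 2 * x ^ 2 + 2 * x * y + 2 * y ^ 2 = 2 * y ^ 2 + 2 * y * x + 2 * x ^ 2 := by ring
        rw [hs]
        exact forward_case hy (by simp [hx])
    · by_cases hy : y = 0
      · right; exact forward_case hx (by simp [hy])
      · right
        have hvx := Nat.zero_le x.valuation
        have hvy := Nat.zero_le y.valuation
        rcases le_total x.valuation y.valuation with h | h
        · refine forward_case hx ?_
          rw [PadicInt.unitCoeff_spec hx, PadicInt.unitCoeff_spec hy, Units.mul_left_dvd]
          exact dvd_mul_of_dvd_right (pow_dvd_pow _ (by omega)) _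
        · have hs : 2 * x ^ 2 + 2 * x * y + 2 * y ^ 2 = 2 * y ^ 2 + 2 * y * x + 2 * x ^ 2 := by ring
          rw [hs]
          refine forward_case hy ?_
          rw [PadicInt.unitCoeff_spec hx, PadicInt.unitCoeff_spec hy, Units.mul_left_dvd]
          exact dvd_mul_of_dvd_right (pow_dvd_pow _ (by omega)) _
  · rintro (rfl | hodd)
    · exact ⟨0, 0, by ring⟩
    · have hw : w ≠ 0 := by
        rintro rfl
        simp [PadicInt.valuation_zero] at hodd
      obtain ⟨k, hk⟩ : ∃ k : ℕ, w.valuation = 2 * k + 1 := by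
        obtain ⟨m, hm⟩ := hodd
        have h0 := Nat.zero_le w.valuation
        refine ⟨m, ?_⟩; omega
      obtain ⟨t, ht⟩ := represent_unit (PadicInt.unitCoeff hw).isUnit
      refine ⟨2 ^ k, 2 ^ k * t, ?_⟩
      rw [PadicInt.unitCoeff_spec hw, hk, ← ht]
      ring
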